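/- Let X = {x_1, x_2, x_3, x_4} be a 4-element set and let d : X^3 → ℝ be the symmetric function with d = 0 on tuples that are not all distinct, d(x_1,x_2,x_3) = 0, and d(x_σ(1),x_σ(2),x_σ(3)) equal to 1 on every ordering of each of the triples {x_1,x_2,x_4}, {x_1,x_3,x_4}, {x_2,x_3,x_4}. Then (X, d) ∈ C_{3,2}^2 (it is a 2-dimensional coboundary 3-pseudometric with respect to the Euclidean norm), but for every integer m ≥ 1, (X, d) ∉ V_3^m; i.e., there is no map g : X → ℝ^m realizing d as triangle areas. -/

import Mathlib

open scoped BigOperators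

/-- An alternating real-valued function on `j`-tuples of `X`
(a `(j-1)`-dimensional chain on the complete complex on `X`). -/
def AltChain {X : Type*} {j : ℕ} (α : (Fin j → X) → ℝ) : Prop :=
  ∀ (π : Equiv.Perm (Fin j)) (x : Fin j → X),
    α (x ∘ π) = ((Equiv.Perm.sign π : ℤ) : ℝ) * α x

/-- The boundary operator: `(∂α)(y₁,…,y_j) = ∑_{x ∈ X} α(x, y₁, …, y_j)`. -/
noncomputable def bdry {X : Type*} [Fintype X] {j : ℕ}
    (α : (Fin (j + 1) → X) → ℝ) : (Fin j → X) → ℝ :=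
  fun y => ∑ x : X, α (Fin.cons x y)

/-- The elementary chain `1_t`: value `sign π` on the reordering of `t` by `π`,
and `0` on all other tuples. -/
noncomputable def unitChain {X : Type*} [DecidableEq X] {j : ℕ} (t : Fin j → X) :
    (Fin j → X) → ℝ :=
  fun s => ∑ π : Equiv.Perm (Fin j),
    if s = t ∘ π then ((Equiv.Perm.sign π : ℤ) : ℝ) else 0

/-- The coboundary operator:
`(δf)(x₁,…,x_{j+2}) = ∑ᵢ (-1)^(i+1) f(x₁,…,x̂ᵢ,…,x_{j+2})` (`0`-indexed sign `(-1)^i`). -/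
noncomputable def cobdry {X : Type*} {j : ℕ}
    (f : (Fin (j + 1) → X) → ℝ) : (Fin (j + 2) → X) → ℝ :=
  fun x => ∑ i : Fin (j + 2), (-1 : ℝ) ^ (i : ℕ) * f (x ∘ i.succAbove)

/-- A pseudo metric of arity `K` (a pseudo `K`-metric): nonnegative, vanishing on
non-injective tuples, permutation invariant, satisfying the simplex inequality. -/
structure IsPseudoMetric {X : Type*} (K : ℕ) (d : (Fin K → X) → ℝ) : Prop where
  nonneg : ∀ x, 0 ≤ d x
  eq_zero : ∀ x, ¬ Function.Injective x → d x = 0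
  perm : ∀ (π : Equiv.Perm (Fin K)) (x), d (x ∘ π) = d x
  simplex : ∀ (x : Fin K → X) (y : X),
    d x ≤ ∑ i : Fin K, d (Function.update x i y)

/-- A strong pseudo metric of arity `k + 1` (a strong pseudo `(k+1)`-metric).
The strong simplex inequality `d t ≤ ∑_τ |α(τ)| * d(τ)` (with the sum over
`(k+1)`-element subsets `τ` of `X`, each evaluated on any fixed ordering of `τ`)
is stated in the equivalent form `(k+1)! * d t ≤ ∑_s |α(s)| * d(s)` with the sum
over all `(k+1)`-tuples `s`: since `α` is alternating and `d` is permutation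
invariant, the summand depends only on the underlying set of `s` (it vanishes on
tuples with repeated entries), and each `(k+1)`-element subset has exactly
`(k+1)!` orderings. -/
structure IsStrongPseudoMetric {X : Type*} [Fintype X] [DecidableEq X] (k : ℕ)
    (d : (Fin (k + 1) → X) → ℝ) : Prop where
  nonneg : ∀ x, 0 ≤ d x
  eq_zero : ∀ x, ¬ Function.Injective x → d x = 0
  perm : ∀ (π : Equiv.Perm (Fin (k + 1))) (x), d (x ∘ π) = d x
  strong_simplex : ∀ t : Fin (k + 1) → X, Function.Injective t →
    ∀ α : (Fin (k + 1) → X) → ℝ, AltChain α → bdry α = bdry (unitChain t) →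
      ((k + 1).factorial : ℝ) * d t ≤ ∑ s : Fin (k + 1) → X, |α s| * d s

/-- `(X, d)` is a coboundary metric of arity `k + 2` in `m` dimensions with respect
to the norm `ν` on `ℝ^m`: there are chains `f 1, …, f m` on `(k+1)`-tuples (i.e.
`(k+2)-2`-dimensional chains for arity `k+2`) whose simultaneous coboundary
realizes `d` on injective tuples, and `d` vanishes on non-injective tuples. -/
def IsCoboundaryMetric {X : Type*} (k m : ℕ) (ν : (Fin m → ℝ) → ℝ)
    (d : (Fin (k + 2) → X) → ℝ) : Prop :=
  ∃ f : Fin m → ((Fin (k + 1) → X) → ℝ),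
    (∀ i, AltChain (f i)) ∧
    (∀ x, Function.Injective x → d x = ν (fun i => cobdry (f i) x)) ∧
    (∀ x, ¬ Function.Injective x → d x = 0)

/-- `ν` is a norm on `ℝ^m`. -/
structure IsNorm {m : ℕ} (ν : (Fin m → ℝ) → ℝ) : Prop where
  nonneg : ∀ x, 0 ≤ ν x
  eq_zero_iff : ∀ x, ν x = 0 ↔ x = 0
  homog : ∀ (c : ℝ) (x), ν (c • x) = |c| * ν x
  triangle : ∀ x y, ν (x + y) ≤ ν x + ν y

/-- The `ℓ_p` norm on `ℝ^m` for real `p`. -/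
noncomputable def lpNorm (p : ℝ) {m : ℕ} (x : Fin m → ℝ) : ℝ :=
  (∑ i, |x i| ^ p) ^ (1 / p)

/-- The `ℓ_1` norm on `ℝ^m`. -/
noncomputable def l1Norm {m : ℕ} (x : Fin m → ℝ) : ℝ := ∑ i, |x i|

/-- The `ℓ_2` (Euclidean) norm on `ℝ^m`. -/
noncomputable def l2Norm {m : ℕ} (x : Fin m → ℝ) : ℝ := Real.sqrt (∑ i, x i ^ 2)

/-- The `ℓ_∞` norm on `ℝ^m` (the sup norm, which is the norm of `Fin m → ℝ`). -/
noncomputable def linfNorm {m : ℕ} (x : Fin m → ℝ) : ℝ := ‖x‖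

/- The apex extension of `d` (of arity `K`), with the apex being
`none : Option X` (a new element not in `X`): on an injective `(K+1)`-tuple
containing the apex in position `i` it is `d` of the tuple with position `i`
removed, and it is `0` on all other tuples. -/
open Classical in
noncomputable def apexExt {X : Type*} {K : ℕ} (d : (Fin K → X) → ℝ) :
    (Fin (K + 1) → Option X) → ℝ := fun x =>
  if h : Function.Injective x ∧ ∃ i, x i = none then
    d (fun j =>
      Option.get (x ((Classical.choose h.2).succAbove j))
        (by
          rw [Option.isSome_iff_ne_none]
          intro hnone
          exact Fin.succAbove_ne (Classical.choose h.2) j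
            (h.1 (hnone.trans (Classical.choose_spec h.2).symm))))
  else 0

/-- The `K`-dimensional volume of the simplex with vertices `y 0, …, y K` in `ℝ^m`:
`(1/K!) * √(det (AᵀA))` where `A` is the `m × K` matrix with columns
`y i - y 0`, `i = 1, …, K`. -/
noncomputable def simplexVolume {m K : ℕ} (y : Fin (K + 1) → (Fin m → ℝ)) : ℝ :=
  (1 / (K.factorial : ℝ)) *
    Real.sqrt
      (Matrix.det
        (Matrix.of fun i j : Fin K =>
          ∑ l : Fin m, (y i.succ l - y 0 l) * (y j.succ l - y 0 l)))

open Classical in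
/-- The 3-pseudometric on `{x₁, x₂, x₃, x₄} = Fin 4` with `d(x₁,x₂,x₃) = 0`,
value `1` on (each ordering of) the other three distinct triples, and `0` on
non-distinct triples. -/
noncomputable def dFour : (Fin 3 → Fin 4) → ℝ := fun x =>
  if Function.Injective x then
    (if (Finset.image x Finset.univ : Finset (Fin 4)) = ({0, 1, 2} : Finset (Fin 4))
      then 0 else 1)
  else 0


/-! ### Auxiliary definitions and lemmas for `stmt_16` -/

noncomputable def ccF : Fin 2 → Fin 4 → ℝ := fun i a =>
  if a = 1 then (if i = 0 then 1 else 0)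
  else if a = 2 then (if i = 0 then 1/2 else Real.sqrt 3 / 2)
  else 0

noncomputable def chF : Fin 2 → (Fin 2 → Fin 4) → ℝ := fun i s =>
  (if s 1 = 3 then ccF i (s 0) else 0) - (if s 0 = 3 then ccF i (s 1) else 0)

lemma sqrt3sq : Real.sqrt 3 ^ 2 = 3 := Real.sq_sqrt (by norm_num)

lemma chF_alt (i : Fin 2) : AltChain (chF i) := by
  intro π x
  have hπ : π = 1 ∨ π = Equiv.swap 0 1 := by revert π; decide
  rcases hπ with h | h <;> subst h
  · simp [chF]
    congr
  · have h0 : (x ∘ (Equiv.swap (0:Fin 2) 1)) 0 = x 1 := by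
      simp [Equiv.swap_apply_left]
    have h1 : (x ∘ (Equiv.swap (0:Fin 2) 1)) 1 = x 0 := by
      simp [Equiv.swap_apply_right]
    rw [Equiv.Perm.sign_swap (by decide)]
    simp only [chF, h0, h1]
    push_cast
    ring

lemma chF_realizes : ∀ x : Fin 3 → Fin 4, Function.Injective x →
    dFour x = l2Norm (fun i => cobdry (chF i) x) := by
  intro x hx
  have hxe : x = ![x 0, x 1, x 2] := by
    funext i; fin_cases i <;> rfl
  rw [hxe] at hx ⊢
  set a := x 0; set b := x 1; set c := x 2
  clear_value a b c
  fin_cases a <;> fin_cases b <;> fin_cases c <;>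
    first
      | exact absurd hx (by decide)
      | (simp only [dFour]
         rw [if_pos (by decide), if_pos (by decide)]
         simp (config := { decide := true }) only [l2Norm, cobdry, chF, ccF,
           Fin.sum_univ_succ, Fin.sum_univ_zero, Fin.isValue]
         norm_num [Real.sqrt_zero])
      | (simp only [dFour]
         rw [if_pos (by decide), if_neg (by decide)]
         simp (config := { decide := true }) only [l2Norm, cobdry, chF, ccF,
           Fin.sum_univ_succ, Fin.sum_univ_zero, Fin.isValue]
         norm_num
         first
           | done
           | (symm; rw [Real.sqrt_eq_one]; nlinarith [sqrt3sq]))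

noncomputable def ip {m : ℕ} (u v : Fin m → ℝ) : ℝ := ∑ i, u i * v i

lemma ip_self_nonneg {m : ℕ} (u : Fin m → ℝ) : 0 ≤ ip u u :=
  Finset.sum_nonneg fun _ _ => mul_self_nonneg _

lemma ip_self_eq_zero {m : ℕ} {u : Fin m → ℝ} (h : ip u u = 0) : ∀ i, u i = 0 := by
  intro i
  have h1 : ∀ j ∈ Finset.univ, (0:ℝ) ≤ u j * u j := fun j _ => mul_self_nonneg _
  exact mul_self_eq_zero.mp ((Finset.sum_eq_zero_iff_of_nonneg h1).mp h i (Finset.mem_univ i))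

lemma sum_comb {m : ℕ} (u w : Fin m → ℝ) (F : Fin m → ℝ) (c1 c2 c3 : ℝ)
    (hF : ∀ l, F l = c1 * (u l * u l) + c2 * (u l * w l) + c3 * (w l * w l)) :
    ∑ l, F l = c1 * ip u u + c2 * ip u w + c3 * ip w w := by
  unfold ip
  rw [Finset.mul_sum, Finset.mul_sum, Finset.mul_sum, ← Finset.sum_add_distrib,
    ← Finset.sum_add_distrib]
  exact Finset.sum_congr rfl fun l _ => hF l

lemma dep {m : ℕ} (u v : Fin m → ℝ) (h : ip u u * ip v v - ip u v ^ 2 ≤ 0) :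
    (∀ i, u i = 0) ∨ ∃ t : ℝ, ∀ i, v i = t * u i := by
  by_cases hu : ip u u = 0
  · exact Or.inl (ip_self_eq_zero hu)
  · right
    have hupos : 0 < ip u u := lt_of_le_of_ne (ip_self_nonneg u) (Ne.symm hu)
    set s : ℝ := ip u v / ip u u with hs
    refine ⟨s, fun i => ?_⟩
    have hr : ip (fun l => v l - s * u l) (fun l => v l - s * u l)
        = s ^ 2 * ip u u + (-2 * s) * ip u v + 1 * ip v v :=
      sum_comb u v _ _ _ _ (fun l => by ring)
    have hval : ip u u * ip (fun l => v l - s * u l) (fun l => v l - s * u l)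
        = ip u u * ip v v - ip u v ^ 2 := by
      rw [hr, hs]; field_simp; ring
    have hrz : ip (fun l => v l - s * u l) (fun l => v l - s * u l) = 0 := by
      have hnn := ip_self_nonneg (fun l => v l - s * u l)
      nlinarith
    have := ip_self_eq_zero hrz i
    linarith

lemma main2 {m : ℕ} (u v w : Fin m → ℝ)
    (h1 : ip u u * ip v v - ip u v ^ 2 ≤ 0)
    (h2 : ip u u * ip w w - ip u w ^ 2 = 4)
    (h3 : ip v v * ip w w - ip v w ^ 2 = 4)
    (h4 : ip (fun l => v l - u l) (fun l => v l - u l) *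
            ip (fun l => w l - u l) (fun l => w l - u l) -
          ip (fun l => v l - u l) (fun l => w l - u l) ^ 2 = 4) : False := by
  rcases dep u v h1 with hu | ⟨t, hv⟩
  · have hA : ip u u = 0 := by
      unfold ip; exact Finset.sum_eq_zero fun i _ => by rw [hu i]; ring
    have hB : ip u w = 0 := by
      unfold ip; exact Finset.sum_eq_zero fun i _ => by rw [hu i]; ring
    rw [hA, hB] at h2; norm_num at h2
  · have e1 : ip v v = t ^ 2 * ip u u + 0 * ip u w + 0 * ip w w :=
      sum_comb u w _ _ _ _ (fun l => by rw [hv l]; ring)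
    have e3 : ip v w = 0 * ip u u + t * ip u w + 0 * ip w w :=
      sum_comb u w _ _ _ _ (fun l => by rw [hv l]; ring)
    have e4 : ip (fun l => v l - u l) (fun l => v l - u l)
        = (t - 1) ^ 2 * ip u u + 0 * ip u w + 0 * ip w w :=
      sum_comb u w _ _ _ _ (fun l => by show (v l - u l) * (v l - u l) = _; rw [hv l]; ring)
    have e5 : ip (fun l => v l - u l) (fun l => w l - u l)
        = (1 - t) * ip u u + (t - 1) * ip u w + 0 * ip w w :=
      sum_comb u w _ _ _ _ (fun l => by show (v l - u l) * (w l - u l) = _; rw [hv l]; ring)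
    have e6 : ip (fun l => w l - u l) (fun l => w l - u l)
        = 1 * ip u u + (-2) * ip u w + 1 * ip w w :=
      sum_comb u w _ _ _ _ (fun l => by show (w l - u l) * (w l - u l) = _; ring)
    rw [e1, e3] at h3
    rw [e4, e5, e6] at h4
    set A := ip u u; set B := ip u w; set C := ip w w
    have ht1 : t ^ 2 = 1 := by nlinarith [h2, h3]
    have ht2 : (t - 1) ^ 2 = 1 := by nlinarith [h2, h4]
    have h5 : t = 1 / 2 := by nlinarith [ht1, ht2]
    rw [h5] at ht1; norm_num at ht1

lemma sv_eq' {m : ℕ} (p q r : Fin m → ℝ) :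
    simplexVolume ![p, q, r] =
      1 / 2 * Real.sqrt
        (ip (fun l => q l - p l) (fun l => q l - p l) *
            ip (fun l => r l - p l) (fun l => r l - p l) -
          ip (fun l => q l - p l) (fun l => r l - p l) ^ 2) := by
  unfold simplexVolume ip
  rw [Matrix.det_fin_two]
  norm_num [Matrix.cons_val_succ, Fin.succ_zero_eq_one, Fin.succ_one_eq_two]
  congr 1
  have : ∑ l, (r l - p l) * (q l - p l) = ∑ l, (q l - p l) * (r l - p l) :=
    Finset.sum_congr rfl fun l _ => mul_comm _ _
  rw [this]; ring

lemma le_zero_of_sv {X : ℝ} (h : (0:ℝ) = 1 / 2 * Real.sqrt X) : X ≤ 0 :=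
  Real.sqrt_eq_zero'.mp (by linarith)

lemma eq_four_of_sv {X : ℝ} (h : (1:ℝ) = 1 / 2 * Real.sqrt X) : X = 4 := by
  have h2 : Real.sqrt X = 2 := by linarith
  have h0 : 0 ≤ X := by
    by_contra hc; push_neg at hc
    rw [Real.sqrt_eq_zero'.mpr hc.le] at h2; norm_num at h2
  rw [← Real.sq_sqrt h0, h2]; norm_num

/-- `(Fin 4, dFour)` is in `C_{3,2}^2` (a 2-dimensional coboundary
3-pseudometric w.r.t. the Euclidean norm), but it is not an `m`-dimensional
volume 3-pseudometric for any `m ≥ 1`. -/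
theorem stmt_16 :
    IsCoboundaryMetric 1 2 l2Norm dFour ∧
      ∀ m : ℕ, 1 ≤ m →
        ¬ ∃ g : Fin 4 → (Fin m → ℝ),
            ∀ x : Fin 3 → Fin 4,
              dFour x = simplexVolume (m := m) (K := 2) fun i => g (x i) := by
  constructor
  · refine ⟨chF, chF_alt, chF_realizes, fun x hx => ?_⟩
    simp only [dFour]
    rw [if_neg hx]
  · rintro m _ ⟨g, hg⟩
    have d012 : dFour ![0, 1, 2] = 0 := by
      simp only [dFour]; rw [if_pos (by decide), if_pos (by decide)]
    have d013 : dFour ![0, 1, 3] = 1 := by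
      simp only [dFour]; rw [if_pos (by decide), if_neg (by decide)]
    have d023 : dFour ![0, 2, 3] = 1 := by
      simp only [dFour]; rw [if_pos (by decide), if_neg (by decide)]
    have d123 : dFour ![1, 2, 3] = 1 := by
      simp only [dFour]; rw [if_pos (by decide), if_neg (by decide)]
    have r012 : (fun i => g (![0, 1, 2] i)) = ![g 0, g 1, g 2] := by
      funext i; fin_cases i <;> rfl
    have r013 : (fun i => g (![0, 1, 3] i)) = ![g 0, g 1, g 3] := by
      funext i; fin_cases i <;> rfl
    have r023 : (fun i => g (![0, 2, 3] i)) = ![g 0, g 2, g 3] := by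
      funext i; fin_cases i <;> rfl
    have r123 : (fun i => g (![1, 2, 3] i)) = ![g 1, g 2, g 3] := by
      funext i; fin_cases i <;> rfl
    have e012 := hg ![0, 1, 2]
    rw [d012, r012, sv_eq'] at e012
    have e013 := hg ![0, 1, 3]
    rw [d013, r013, sv_eq'] at e013
    have e023 := hg ![0, 2, 3]
    rw [d023, r023, sv_eq'] at e023
    have e123 := hg ![1, 2, 3]
    rw [d123, r123, sv_eq'] at e123
    have c1 : (fun l => g 2 l - g 1 l) = (fun l => (g 2 l - g 0 l) - (g 1 l - g 0 l)) :=
      funext fun l => by ring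
    have c2 : (fun l => g 3 l - g 1 l) = (fun l => (g 3 l - g 0 l) - (g 1 l - g 0 l)) :=
      funext fun l => by ring
    rw [c1, c2] at e123
    exact main2 (fun l => g 1 l - g 0 l) (fun l => g 2 l - g 0 l) (fun l => g 3 l - g 0 l)
      (le_zero_of_sv e012) (eq_four_of_sv e013) (eq_four_of_sv e023) (eq_four_of_sv e123)
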